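/- Let f be a topological flow on a compact metric space M. If the chain recurrent set R_f of f is finite, then every point of R_f is a fixed point of f, i.e. f(t,x) = x for all t ∈ ℝ and all x ∈ R_f. -/

import Mathlib

open Filter Topology Set

/-- The model linear flow `a^t_λ` on `ℝ^n`. -/
noncomputable def modelFlow (n lam : ℕ) (t : ℝ) (x : Fin n → ℝ) : Fin n → ℝ :=
  fun i => if (i : ℕ) < lam then (2 : ℝ) ^ t * x i else (2 : ℝ) ^ (-t) * x i

/-- An `ε`-chain of length `T` from `x` to `y` for the flow `f`. -/
def IsEpsChain {M : Type*} [MetricSpace M] (f : ℝ → M → M) (ε T : ℝ) (x y : M) : Prop :=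
  ∃ (m : ℕ) (xs : ℕ → M) (ts : ℕ → ℝ), 0 < m ∧ xs 0 = x ∧ xs m = y ∧
    (∀ i ∈ Finset.Icc 1 m, 1 ≤ ts i ∧ dist (f (ts i) (xs (i - 1))) (xs i) < ε) ∧
    ∑ i ∈ Finset.Icc 1 m, ts i = T

/-- A point is chain recurrent if for every `ε > 0` there is an `ε`-chain of some
length `T` from the point to itself. -/
def IsChainRecurrent {M : Type*} [MetricSpace M] (f : ℝ → M → M) (x : M) : Prop :=
  ∀ ε > 0, ∃ T > 0, IsEpsChain f ε T x x

/-- The stable manifold `W^s_p`. -/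
def stableSet {M : Type*} [TopologicalSpace M] (f : ℝ → M → M) (p : M) : Set M :=
  {y | Tendsto (fun t : ℝ => f t y) atTop (nhds p)}

/-- The unstable manifold `W^u_p`. -/
def unstableSet {M : Type*} [TopologicalSpace M] (f : ℝ → M → M) (p : M) : Set M :=
  {y | Tendsto (fun t : ℝ => f (-t) y) atTop (nhds p)}

/-- `p` is a topologically hyperbolic fixed point of index `lam` of the flow `f`. -/
def IsTopHyperbolicFixedPt {M : Type*} [TopologicalSpace M] (n : ℕ) (f : ℝ → M → M)
    (p : M) (lam : ℕ) : Prop :=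
  lam ≤ n ∧ (∀ t : ℝ, f t p = p) ∧
  ∃ (U : Set M) (_ : IsOpen U) (hp : p ∈ U) (h : U ≃ₜ (Fin n → ℝ)),
    h ⟨p, hp⟩ = 0 ∧
    ∀ (t : ℝ) (y : M) (hy : y ∈ U) (hfy : ∀ s ∈ Set.uIcc (0 : ℝ) t, f s y ∈ U),
      (h ⟨f t y, hfy t Set.right_mem_uIcc⟩ : Fin n → ℝ) = modelFlow n lam t (h ⟨y, hy⟩)

/-- `p` is a regular point of `φ` (in the sense of continuous Morse theory). -/
def IsRegularPoint {M : Type*} [TopologicalSpace M] (n : ℕ) (φ : M → ℝ) (p : M) : Prop :=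
  ∃ (V : Set M) (_ : IsOpen V) (hp : p ∈ V) (ψ : V ≃ₜ (Fin n → ℝ)) (j : Fin n),
    (j : ℕ) + 1 = n ∧ ψ ⟨p, hp⟩ = 0 ∧ ∀ y : V, φ y = φ p + ψ y j

/-- `p` is a non-degenerate critical point of `φ` of index `ν`. -/
def IsNondegenerateCriticalPoint {M : Type*} [TopologicalSpace M] (n : ℕ) (φ : M → ℝ)
    (p : M) (ν : ℕ) : Prop :=
  ν ≤ n ∧ ¬ IsRegularPoint n φ p ∧
  ∃ (V : Set M) (_ : IsOpen V) (hp : p ∈ V) (ψ : V ≃ₜ (Fin n → ℝ)),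
    ψ ⟨p, hp⟩ = 0 ∧
    ∀ y : V, φ y = φ p
      - ∑ i ∈ Finset.univ.filter (fun i : Fin n => (i : ℕ) < ν), (ψ y i) ^ 2
      + ∑ i ∈ Finset.univ.filter (fun i : Fin n => ν ≤ (i : ℕ)), (ψ y i) ^ 2

/-- `M` is locally Euclidean of dimension `n` (every point has a neighborhood
homeomorphic to `ℝ^n`). -/
def LocallyEuclidean (n : ℕ) (M : Type*) [TopologicalSpace M] : Prop :=
  ∀ p : M, ∃ U : Set M, IsOpen U ∧ p ∈ U ∧ Nonempty (U ≃ₜ (Fin n → ℝ))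


lemma finite_preconnected_subsingleton {M : Type*} [MetricSpace M] {s : Set M}
    (hfin : s.Finite) (hconn : IsPreconnected s) : s.Subsingleton := by
  intro a ha b hb
  by_contra hne
  have hbne : b ∈ s \ {a} := ⟨hb, fun h => hne (h.symm ▸ rfl)⟩
  obtain ⟨c, hc, hcmin⟩ := Set.exists_min_image (s \ {a}) (fun y => dist y a)
    (hfin.diff) ⟨b, hbne⟩
  set ε := dist c a with hε
  have hε0 : 0 < ε := dist_pos.mpr (by simpa using hc.2)
  have hcover : s ⊆ Metric.ball a (ε / 2) ∪ (Metric.closedBall a (ε / 2))ᶜ := by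
    intro y hy
    by_cases hya : y = a
    · left; simp [hya, Metric.mem_ball, hε0, half_pos hε0]
    · right
      have : ε ≤ dist y a := hcmin y ⟨hy, hya⟩
      simp only [Set.mem_compl_iff, Metric.mem_closedBall, not_le]
      linarith
  have hbV : b ∈ s ∩ (Metric.closedBall a (ε / 2))ᶜ := by
    refine ⟨hb, ?_⟩
    have : ε ≤ dist b a := hcmin b hbne
    simp only [Set.mem_compl_iff, Metric.mem_closedBall, not_le]
    linarith
  obtain ⟨y, hys, hyU, hyV⟩ := hconn (Metric.ball a (ε / 2)) (Metric.closedBall a (ε / 2))ᶜ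
    Metric.isOpen_ball (Metric.isClosed_closedBall.isOpen_compl) hcover
    ⟨a, ha, by simp [Metric.mem_ball, half_pos hε0]⟩ ⟨b, hbV⟩
  exact hyV (Metric.ball_subset_closedBall hyU)

lemma chainRecurrent_invariant {M : Type*} [MetricSpace M] [CompactSpace M]
    (f : ℝ → M → M)
    (hf_cont : Continuous fun q : ℝ × M => f q.1 q.2)
    (hf_add : ∀ s t : ℝ, ∀ x, f t (f s x) = f (t + s) x)
    (s : ℝ) {x : M} (hx : IsChainRecurrent f x) : IsChainRecurrent f (f s x) := by
  intro ε hε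
  have hgc : Continuous (f s) :=
    hf_cont.comp (continuous_const.prodMk continuous_id)
  have hu : UniformContinuous (f s) := CompactSpace.uniformContinuous_of_continuous hgc
  rw [Metric.uniformContinuous_iff] at hu
  obtain ⟨δ, hδ0, hδ⟩ := hu ε hε
  obtain ⟨T, hT, m, xs, ts, hm, h0, hmm, hstep, hsum⟩ := hx δ hδ0
  refine ⟨T, hT, m, fun i => f s (xs i), ts, hm, by simp [h0], by simp [hmm], ?_, hsum⟩
  intro i hi
  refine ⟨(hstep i hi).1, ?_⟩
  have hcomm : f (ts i) (f s (xs (i - 1))) = f s (f (ts i) (xs (i - 1))) := by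
    rw [hf_add, hf_add, add_comm]
  rw [hcomm]
  exact hδ (hstep i hi).2

/-- If the chain recurrent set of a topological flow on a compact metric
space is finite, then every chain recurrent point is a fixed point. -/
theorem stmt6 {M : Type*} [MetricSpace M] [CompactSpace M]
    (f : ℝ → M → M)
    (hf_cont : Continuous fun q : ℝ × M => f q.1 q.2)
    (hf_zero : ∀ x, f 0 x = x)
    (hf_add : ∀ s t : ℝ, ∀ x, f t (f s x) = f (t + s) x)
    (hfin : {x : M | IsChainRecurrent f x}.Finite) :
    ∀ x : M, IsChainRecurrent f x → ∀ t : ℝ, f t x = x := by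
  intro x hx t
  have hsub : Set.range (fun t => f t x) ⊆ {x : M | IsChainRecurrent f x} := by
    rintro _ ⟨s, rfl⟩
    exact chainRecurrent_invariant f hf_cont hf_add s hx
  have hpc : IsPreconnected (Set.range fun t => f t x) :=
    isPreconnected_range (hf_cont.comp (continuous_id.prodMk continuous_const))
  have hss := finite_preconnected_subsingleton (hfin.subset hsub) hpc
  exact hss ⟨t, rfl⟩ ⟨0, hf_zero x⟩
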